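/- With the Euclidean representation û (where ŝ for 1-dimensional s satisfy ‖ŝ‖² = [n]-1, ⟨ŝ,t̂⟩ = -1 for s ≠ t, Σ ŝ = 0, and û = Σ_{s⊆u} ŝ), for any k-dimensional subspace x of V (n > 2k ≥ 6), the sum of ẑ over all k-dimensional subspaces z with dim(x ∩ z) = k - 1 equals θ₁ x̂, where θ₁ = q²[k-1][n-k-1] - 1. -/

import Mathlib

set_option linter.unusedSectionVars false

open Module Submodule Finset

/-- Gaussian number as a natural number. -/
def gaussN (q m : ℕ) : ℕ := ∑ i ∈ Finset.range m, q ^ i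

lemma aux19_geom (q : ℕ) (hq : 1 ≤ q) (m : ℕ) : (q - 1) * gaussN q m + 1 = q ^ m := by
  induction m with
  | zero => simp [gaussN]
  | succ m ih =>
    have h1 : (q - 1) * gaussN q (m + 1) + 1
        = ((q - 1) * gaussN q m + 1) + (q - 1) * q ^ m := by
      rw [gaussN, Finset.sum_range_succ]; ring_nf; rw [gaussN]
    rw [h1, ih, pow_succ]
    have h3 : 1 + (q - 1) = q := by omega
    calc q ^ m + (q - 1) * q ^ m = (1 + (q - 1)) * q ^ m := by ring
      _ = q ^ m * q := by rw [h3]; ring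

lemma aux19_gauss_pos (q m : ℕ) (hm : 0 < m) : 1 ≤ gaussN q m := by
  have : (1:ℕ) = q ^ 0 * 1 := by simp
  calc (1:ℕ) = q ^ 0 := by simp
    _ ≤ ∑ i ∈ Finset.range m, q ^ i :=
        Finset.single_le_sum (fun i _ => Nat.zero_le _) (Finset.mem_range.mpr hm)

section Mods

variable {F V : Type*} [Field F] [Fintype F] [AddCommGroup V] [Module F V]
  [FiniteDimensional F V]

lemma aux19_finite_submodule : Finite (Submodule F V) := by
  haveI : Finite V := Module.finite_of_finite F
  exact Finite.of_injective (fun p => (p : Set V)) SetLike.coe_injective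

lemma aux19_card_lines :
    Nat.card {ℓ : Submodule F V // finrank F ℓ = 1}
      = gaussN (Fintype.card F) (finrank F V) := by
  classical
  haveI : Finite V := Module.finite_of_finite F
  haveI : Fintype V := Fintype.ofFinite V
  haveI : Finite (Submodule F V) := aux19_finite_submodule
  haveI : Fintype (Submodule F V) := Fintype.ofFinite _
  set q := Fintype.card F with hqdef
  have hq2 : 2 ≤ q := Fintype.one_lt_card
  set d := finrank F V with hd
  have key : (univ.filter (fun v : V => v ≠ 0)).card
      = ∑ ℓ ∈ univ.filter (fun ℓ : Submodule F V => finrank F ℓ = 1),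
          ((univ.filter (fun v : V => v ≠ 0)).filter (fun v => span F {v} = ℓ)).card := by
    apply Finset.card_eq_sum_card_fiberwise
    intro v hv
    simp only [Finset.mem_coe, mem_filter, mem_univ, true_and] at hv ⊢
    exact finrank_span_singleton hv
  have fib : ∀ ℓ ∈ univ.filter (fun ℓ : Submodule F V => finrank F ℓ = 1),
      ((univ.filter (fun v : V => v ≠ 0)).filter (fun v => span F {v} = ℓ)).card = q - 1 := by
    intro ℓ hℓ
    simp only [mem_filter, mem_univ, true_and] at hℓ
    have hset : (univ.filter (fun v : V => v ≠ 0)).filter (fun v => span F {v} = ℓ)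
        = univ.filter (fun v : V => v ∈ ℓ ∧ v ≠ 0) := by
      ext v
      simp only [mem_filter, mem_univ, true_and]
      constructor
      · rintro ⟨h0, rfl⟩; exact ⟨mem_span_singleton_self v, h0⟩
      · rintro ⟨hm, h0⟩
        refine ⟨h0, Submodule.eq_of_le_of_finrank_eq ?_ ?_⟩
        · rwa [span_le, Set.singleton_subset_iff]
        · rw [finrank_span_singleton h0, hℓ]
    rw [hset]
    have e : {v : V // v ∈ ℓ ∧ v ≠ 0} ≃ {u : ℓ // ¬ (u = 0)} :=
      { toFun := fun v => ⟨⟨v.1, v.2.1⟩, by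
          simp only [Submodule.mk_eq_zero]; exact v.2.2⟩
        invFun := fun u => ⟨u.1.1, u.1.2, by
          intro h; exact u.2 (by ext; simp [h])⟩
        left_inv := fun v => rfl
        right_inv := fun u => rfl }
    have h1 : Fintype.card {u : ℓ // ¬ (u = 0)} = q - 1 := by
      rw [Fintype.card_subtype_compl]
      have : Fintype.card ℓ = q ^ finrank F ℓ := card_eq_pow_finrank
      rw [this, hℓ, pow_one, Fintype.card_subtype_eq]
    rw [← Fintype.card_subtype, Fintype.card_congr e, h1]
  have hnz : (univ.filter (fun v : V => v ≠ 0)).card = q ^ d - 1 := by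
    rw [← Fintype.card_subtype]
    have e : {v : V // v ≠ 0} ≃ {v : V // ¬ (v = 0)} := Equiv.refl _
    rw [Fintype.card_congr e, Fintype.card_subtype_compl, Fintype.card_subtype_eq]
    rw [show Fintype.card V = q ^ d from card_eq_pow_finrank]
  have hsum : q ^ d - 1
      = (univ.filter (fun ℓ : Submodule F V => finrank F ℓ = 1)).card * (q - 1) := by
    rw [← hnz, key, Finset.sum_congr rfl fib, Finset.sum_const, smul_eq_mul]
  have hcard : Nat.card {ℓ : Submodule F V // finrank F ℓ = 1}
      = (univ.filter (fun ℓ : Submodule F V => finrank F ℓ = 1)).card := by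
    rw [Nat.card_eq_fintype_card, Fintype.card_subtype]
  rw [hcard]
  have hgeom := aux19_geom q (by omega) d
  have hpow : 1 ≤ q ^ d := Nat.one_le_pow _ _ (by omega)
  rw [mul_comm] at hsum
  have h5 : (q - 1) * (univ.filter (fun ℓ : Submodule F V => finrank F ℓ = 1)).card
      = (q - 1) * gaussN q d := by omega
  exact Nat.eq_of_mul_eq_mul_left (by omega) h5

lemma aux19_card_hyper :
    Nat.card {w : Submodule F V // finrank F w + 1 = finrank F V}
      = gaussN (Fintype.card F) (finrank F V) := by
  have e : {w : Submodule F V // finrank F w + 1 = finrank F V}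
      ≃ {ℓ : Submodule F (Module.Dual F V) // finrank F ℓ = 1} :=
    { toFun := fun w => ⟨w.1.dualAnnihilator, by
        have h1 := Submodule.finrank_quotient_add_finrank w.1
        have h2 : finrank F (V ⧸ w.1) = finrank F w.1.dualAnnihilator :=
          (Subspace.quotEquivAnnihilator w.1).finrank_eq
        have := w.2
        omega⟩
      invFun := fun ℓ => ⟨ℓ.1.dualCoannihilator, by
        have h1 := Subspace.finrank_add_finrank_dualCoannihilator_eq ℓ.1
        rw [ℓ.2] at h1
        omega⟩
      left_inv := fun w => Subtype.ext Subspace.dualAnnihilator_dualCoannihilator_eq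
      right_inv := fun ℓ => Subtype.ext Subspace.dualCoannihilator_dualAnnihilator_eq }
  rw [Nat.card_congr e, aux19_card_lines, Subspace.dual_finrank_eq]

lemma aux19_card_hyper_le (x : Submodule F V) :
    Nat.card {w : Submodule F V // w ≤ x ∧ finrank F w + 1 = finrank F x}
      = gaussN (Fintype.card F) (finrank F x) := by
  have e : {w : Submodule F x // finrank F w + 1 = finrank F x}
      ≃ {w : Submodule F V // w ≤ x ∧ finrank F w + 1 = finrank F x} :=
    { toFun := fun w => ⟨map x.subtype w.1, map_subtype_le _ _, by
        rw [Submodule.finrank_map_subtype_eq]; exact w.2⟩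
      invFun := fun w => ⟨comap x.subtype w.1, by
        rw [(Submodule.comapSubtypeEquivOfLe w.2.1).finrank_eq]; exact w.2.2⟩
      left_inv := fun w => Subtype.ext
        (Submodule.comap_map_eq_of_injective (Submodule.injective_subtype x) w.1)
      right_inv := fun w => Subtype.ext (by
        show map x.subtype (comap x.subtype w.1) = w.1
        rw [Submodule.map_comap_subtype]; exact inf_eq_right.mpr w.2.1) }
  rw [← Nat.card_congr e, aux19_card_hyper]

lemma aux19_ker_le_comap (w : Submodule F V) (p : Submodule F (V ⧸ w)) :
    w ≤ comap w.mkQ p := by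
  intro v hv
  have h : w.mkQ v = 0 := (Submodule.Quotient.mk_eq_zero w).mpr hv
  simp only [mem_comap, h]
  exact p.zero_mem

lemma aux19_finrank_comap_mkQ (w : Submodule F V) (ℓ : Submodule F (V ⧸ w)) :
    finrank F (comap w.mkQ ℓ) = finrank F ℓ + finrank F w := by
  set z := comap w.mkQ ℓ with hz
  have hwz : w ≤ z := aux19_ker_le_comap w ℓ
  have h1 := LinearMap.finrank_range_add_finrank_ker (w.mkQ.domRestrict z)
  rw [LinearMap.range_domRestrict, LinearMap.ker_domRestrict, Submodule.ker_mkQ] at h1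
  have h2 : map w.mkQ z = ℓ := by
    rw [hz, Submodule.map_comap_eq, Submodule.range_mkQ, top_inf_eq]
  have h3 : finrank F (comap z.subtype w) = finrank F w :=
    (Submodule.comapSubtypeEquivOfLe hwz).finrank_eq
  rw [h2, h3] at h1
  omega

lemma aux19_rank1_inf (s p : Submodule F V) (hs : finrank F s = 1) (hns : ¬ s ≤ p) :
    s ⊓ p = ⊥ := by
  by_contra h
  have h1 : finrank F (s ⊓ p : Submodule F V) ≤ 1 := hs ▸ Submodule.finrank_mono inf_le_left
  have h0 : finrank F (s ⊓ p : Submodule F V) ≠ 0 := by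
    rw [Ne, Submodule.finrank_eq_zero]; exact h
  have heq : s ⊓ p = s := Submodule.eq_of_le_of_finrank_eq inf_le_left (by omega)
  exact hns (heq ▸ inf_le_right)

lemma aux19_countHs (x s : Submodule F V) (hs : finrank F s = 1) (hsx : s ≤ x) :
    Nat.card {w : Submodule F V // (w ≤ x ∧ s ≤ w) ∧ finrank F w + 1 = finrank F x}
      = gaussN (Fintype.card F) (finrank F x - 1) := by
  have hxr : finrank F (map s.mkQ x) + 1 = finrank F x := by
    have h := aux19_finrank_comap_mkQ s (map s.mkQ x)
    rw [Submodule.comap_map_mkQ, sup_eq_right.mpr hsx, hs] at h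
    omega
  have e : {w : Submodule F V // (w ≤ x ∧ s ≤ w) ∧ finrank F w + 1 = finrank F x}
      ≃ {w' : Submodule F (V ⧸ s) // w' ≤ map s.mkQ x
          ∧ finrank F w' + 1 = finrank F (map s.mkQ x)} :=
    { toFun := fun w => ⟨map s.mkQ w.1, map_mono w.2.1.1, by
        have h := aux19_finrank_comap_mkQ s (map s.mkQ w.1)
        rw [Submodule.comap_map_mkQ, sup_eq_right.mpr w.2.1.2, hs] at h
        have := w.2.2
        omega⟩
      invFun := fun w' => ⟨comap s.mkQ w'.1,
        ⟨by
          calc comap s.mkQ w'.1 ≤ comap s.mkQ (map s.mkQ x) := comap_mono w'.2.1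
            _ = x := by rw [Submodule.comap_map_mkQ, sup_eq_right.mpr hsx],
         aux19_ker_le_comap s w'.1⟩, by
        have h := aux19_finrank_comap_mkQ s w'.1
        rw [hs] at h
        have := w'.2.2
        omega⟩
      left_inv := fun w => Subtype.ext (by
        show comap s.mkQ (map s.mkQ w.1) = w.1
        rw [Submodule.comap_map_mkQ, sup_eq_right.mpr w.2.1.2])
      right_inv := fun w' => Subtype.ext (by
        show map s.mkQ (comap s.mkQ w'.1) = w'.1
        rw [Submodule.map_comap_eq, Submodule.range_mkQ, top_inf_eq]) }
  rw [Nat.card_congr e, aux19_card_hyper_le (map s.mkQ x)]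
  congr 1
  omega

lemma aux19_inf_sup_eq (x w s : Submodule F V) (hs : finrank F s = 1) (hns : ¬ s ≤ x)
    (hwx : w ≤ x) {k : ℕ} (hx : finrank F x = k) (hw : finrank F w + 1 = k) :
    x ⊓ (w ⊔ s) = w ∧ finrank F (w ⊔ s : Submodule F V) = k := by
  have hws : w ⊓ s = ⊥ := by
    rw [inf_comm]
    exact aux19_rank1_inf s w hs (fun h => hns (h.trans hwx))
  have hr : finrank F (w ⊔ s : Submodule F V) = k := by
    have h := Submodule.finrank_sup_add_finrank_inf_eq w s
    rw [hws, hs] at h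
    simp only [finrank_bot] at h
    omega
  refine ⟨?_, hr⟩
  set p := x ⊓ (w ⊔ s) with hp
  have hpw : w ≤ p := le_inf hwx le_sup_left
  have hple : p ≤ w ⊔ s := inf_le_right
  have h1 : finrank F p ≤ k := hr ▸ Submodule.finrank_mono hple
  have h2 : finrank F w ≤ finrank F p := Submodule.finrank_mono hpw
  by_cases hrp : finrank F p = k
  · exfalso
    have hpe : p = w ⊔ s := Submodule.eq_of_le_of_finrank_eq hple (hrp.trans hr.symm)
    have hx2 : w ⊔ s ≤ x := by rw [← hpe]; exact inf_le_left
    exact hns (le_sup_right.trans hx2)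
  · exact (Submodule.eq_of_le_of_finrank_eq hpw (by omega)).symm

lemma aux19_countB (x s : Submodule F V) (hs : finrank F s = 1) (hns : ¬ s ≤ x) {k : ℕ}
    (hx : finrank F x = k) (hk : 1 ≤ k) :
    Nat.card {z : Submodule F V //
        (finrank F z = k ∧ finrank F (x ⊓ z : Submodule F V) = k - 1) ∧ s ≤ z}
      = gaussN (Fintype.card F) k := by
  have hsx : s ⊓ x = ⊥ := aux19_rank1_inf s x hs hns
  have e : {z : Submodule F V //
        (finrank F z = k ∧ finrank F (x ⊓ z : Submodule F V) = k - 1) ∧ s ≤ z}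
      ≃ {w : Submodule F V // w ≤ x ∧ finrank F w + 1 = finrank F x} :=
    { toFun := fun z => ⟨x ⊓ z.1, inf_le_left, by rw [z.2.1.2, hx]; omega⟩
      invFun := fun w => by
        refine ⟨w.1 ⊔ s, ⟨?_, ?_⟩, le_sup_right⟩
        · exact (aux19_inf_sup_eq x w.1 s hs hns w.2.1 hx (by omega)).2
        · rw [(aux19_inf_sup_eq x w.1 s hs hns w.2.1 hx (by omega)).1]
          have := w.2.2
          omega
      left_inv := fun z => Subtype.ext (by
        show (x ⊓ z.1) ⊔ s = z.1
        have hle : (x ⊓ z.1) ⊔ s ≤ z.1 := sup_le inf_le_right z.2.2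
        have hinf : (x ⊓ z.1) ⊓ s = ⊥ := by
          have h1 : (x ⊓ z.1) ⊓ s ≤ s ⊓ x := le_inf inf_le_right (inf_le_left.trans inf_le_left)
          rw [hsx] at h1
          exact le_bot_iff.mp h1
        have hr : finrank F ((x ⊓ z.1) ⊔ s : Submodule F V) = k := by
          have h := Submodule.finrank_sup_add_finrank_inf_eq (x ⊓ z.1) s
          rw [hinf, hs, z.2.1.2] at h
          simp only [finrank_bot] at h
          omega
        exact Submodule.eq_of_le_of_finrank_eq hle (by rw [hr, z.2.1.1]))
      right_inv := fun w => Subtype.ext (by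
        show x ⊓ (w.1 ⊔ s) = w.1
        exact (aux19_inf_sup_eq x w.1 s hs hns w.2.1 hx (by omega)).1) }
  rw [Nat.card_congr e, aux19_card_hyper_le x, hx]

lemma aux19_countA (x s : Submodule F V) (hs : finrank F s = 1) (hsx : s ≤ x) {k n : ℕ}
    (hx : finrank F x = k) (hn : finrank F V = n) (hk : 3 ≤ k) (hnk : 2 * k < n) :
    Nat.card {z : Submodule F V //
        (finrank F z = k ∧ finrank F (x ⊓ z : Submodule F V) = k - 1) ∧ s ≤ z}
      = gaussN (Fintype.card F) (k - 1) * (gaussN (Fintype.card F) (n - k + 1) - 1) := by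
  classical
  haveI : Finite (Submodule F V) := aux19_finite_submodule
  haveI : Fintype (Submodule F V) := Fintype.ofFinite _
  set q := Fintype.card F with hqdef
  set P : Submodule F V → Prop := fun z =>
    (finrank F z = k ∧ finrank F (x ⊓ z : Submodule F V) = k - 1) ∧ s ≤ z with hP
  set T : Finset (Submodule F V) := univ.filter P with hT
  set Hs : Finset (Submodule F V) :=
    univ.filter (fun w => (w ≤ x ∧ s ≤ w) ∧ finrank F w + 1 = k) with hHs
  have step1 : T.card = ∑ w ∈ Hs, (T.filter (fun z => x ⊓ z = w)).card := by
    apply Finset.card_eq_sum_card_fiberwise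
    intro z hz
    rw [hT, Finset.mem_coe, mem_filter] at hz
    obtain ⟨-, ⟨hz1, hz2⟩, hz3⟩ := hz
    rw [hHs, Finset.mem_coe, mem_filter]
    exact ⟨mem_univ _, ⟨inf_le_left, le_inf hsx hz3⟩, by omega⟩
  have fib : ∀ w ∈ Hs, (T.filter (fun z => x ⊓ z = w)).card = gaussN q (n - k + 1) - 1 := by
    intro w hw
    rw [hHs, mem_filter] at hw
    obtain ⟨-, ⟨hwx, hsw⟩, hwr⟩ := hw
    haveI : Finite (Submodule F (V ⧸ w)) := aux19_finite_submodule
    haveI : Fintype (Submodule F (V ⧸ w)) := Fintype.ofFinite _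
    have hTf : T.filter (fun z => x ⊓ z = w)
        = univ.filter (fun z : Submodule F V => finrank F z = k ∧ x ⊓ z = w) := by
      ext z
      rw [hT, mem_filter, mem_filter, mem_filter, hP]
      constructor
      · rintro ⟨⟨-, ⟨h1, h2⟩, h3⟩, h4⟩
        exact ⟨mem_univ _, h1, h4⟩
      · rintro ⟨-, h1, h4⟩
        exact ⟨⟨mem_univ _, ⟨h1, by rw [h4]; omega⟩, hsw.trans (h4 ▸ inf_le_right)⟩, h4⟩
    have hxq : finrank F (map w.mkQ x) = 1 := by
      have h := aux19_finrank_comap_mkQ w (map w.mkQ x)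
      rw [Submodule.comap_map_mkQ, sup_eq_right.mpr hwx] at h
      omega
    have hquot : finrank F (V ⧸ w) = n - k + 1 := by
      have h := Submodule.finrank_quotient_add_finrank w
      rw [hn] at h
      omega
    have hbij : (univ.filter (fun z : Submodule F V => finrank F z = k ∧ x ⊓ z = w)).card
        = (univ.filter (fun ℓ : Submodule F (V ⧸ w) =>
            finrank F ℓ = 1 ∧ ℓ ≠ map w.mkQ x)).card := by
      apply Finset.card_bij' (fun z _ => map w.mkQ z) (fun ℓ _ => comap w.mkQ ℓ)
      · intro z hz
        rw [mem_filter] at hz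
        obtain ⟨-, hz1, hz2⟩ := hz
        have hwz : w ≤ z := hz2 ▸ inf_le_right
        have hcm : comap w.mkQ (map w.mkQ z) = z := by
          rw [Submodule.comap_map_mkQ, sup_eq_right.mpr hwz]
        have hrk : finrank F (map w.mkQ z) = 1 := by
          have h := aux19_finrank_comap_mkQ w (map w.mkQ z)
          rw [hcm] at h
          omega
        rw [mem_filter]
        refine ⟨mem_univ _, hrk, ?_⟩
        intro hcon
        have hzx : z = x := by
          have h1 : comap w.mkQ (map w.mkQ x) = x := by
            rw [Submodule.comap_map_mkQ, sup_eq_right.mpr hwx]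
          rw [← hcm, hcon, h1]
        rw [hzx, inf_idem] at hz2
        rw [← hz2] at hwr
        omega
      · intro ℓ hℓ
        rw [mem_filter] at hℓ
        obtain ⟨-, hℓ1, hℓ2⟩ := hℓ
        rw [mem_filter]
        have hrk : finrank F (comap w.mkQ ℓ) = k := by
          rw [aux19_finrank_comap_mkQ, hℓ1]
          omega
        refine ⟨mem_univ _, hrk, ?_⟩
        have hxeq : comap w.mkQ (map w.mkQ x) = x := by
          rw [Submodule.comap_map_mkQ, sup_eq_right.mpr hwx]
        have hinf : map w.mkQ x ⊓ ℓ = ⊥ := by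
          rw [inf_comm]
          apply aux19_rank1_inf _ _ hℓ1
          intro hcon
          exact hℓ2 (Submodule.eq_of_le_of_finrank_eq hcon (by rw [hℓ1, hxq]))
        calc x ⊓ comap w.mkQ ℓ = comap w.mkQ (map w.mkQ x ⊓ ℓ) := by
              rw [Submodule.comap_inf, hxeq]
          _ = w := by rw [hinf, Submodule.comap_bot, Submodule.ker_mkQ]
      · intro z hz
        rw [mem_filter] at hz
        have hwz : w ≤ z := hz.2.2 ▸ inf_le_right
        rw [Submodule.comap_map_mkQ, sup_eq_right.mpr hwz]
      · intro ℓ hℓ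
        rw [Submodule.map_comap_eq, Submodule.range_mkQ, top_inf_eq]
    have hlast : (univ.filter (fun ℓ : Submodule F (V ⧸ w) =>
        finrank F ℓ = 1 ∧ ℓ ≠ map w.mkQ x)).card = gaussN q (n - k + 1) - 1 := by
      have herase : (univ.filter (fun ℓ : Submodule F (V ⧸ w) =>
          finrank F ℓ = 1 ∧ ℓ ≠ map w.mkQ x))
          = (univ.filter (fun ℓ : Submodule F (V ⧸ w) => finrank F ℓ = 1)).erase
              (map w.mkQ x) := by
        ext ℓ
        rw [mem_filter, Finset.mem_erase, mem_filter]
        tauto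
      rw [herase, Finset.card_erase_of_mem (by rw [mem_filter]; exact ⟨mem_univ _, hxq⟩)]
      congr 1
      rw [← Fintype.card_subtype, ← Nat.card_eq_fintype_card, aux19_card_lines, hquot]
    rw [hTf, hbij, hlast]
  have hHscard : Hs.card = gaussN q (k - 1) := by
    rw [← Fintype.card_subtype, ← Nat.card_eq_fintype_card]
    have h := aux19_countHs x s hs hsx
    rw [hx] at h
    exact h
  have : Nat.card {z : Submodule F V //
      (finrank F z = k ∧ finrank F (x ⊓ z : Submodule F V) = k - 1) ∧ s ≤ z} = T.card := by
    rw [hT, Nat.card_eq_fintype_card, Fintype.card_subtype]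
  rw [this, step1, Finset.sum_congr rfl fib, Finset.sum_const, smul_eq_mul, hHscard]

end Mods
/-- The Gaussian number `[m] = (q^m - 1)/(q - 1)` as a real number. -/
noncomputable def gaussR (q m : ℕ) : ℝ := ((q : ℝ) ^ m - 1) / ((q : ℝ) - 1)

/-- The vector `û ∈ E` attached to a subspace `u`: the sum of `ŝ` over all
one-dimensional subspaces `s ⊆ u`. -/
noncomputable def uhat {F V : Type*} [Field F] [AddCommGroup V] [Module F V]
    {E : Type*} [NormedAddCommGroup E] [InnerProductSpace ℝ E]
    (shat : {s : Submodule F V // Module.finrank F s = 1} → E)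
    (u : Submodule F V) : E :=
  ∑ᶠ (s : {s : Submodule F V // Module.finrank F s = 1}) (_ : s.1 ≤ u), shat s

theorem stmt19 {F V : Type*} [Field F] [Fintype F] [AddCommGroup V] [Module F V]
    [FiniteDimensional F V] {q n k : ℕ} (hq : Fintype.card F = q)
    (hn : Module.finrank F V = n) (hnk : n > 2 * k) (hk : 2 * k ≥ 6)
    {E : Type*} [NormedAddCommGroup E] [InnerProductSpace ℝ E]
    (shat : {s : Submodule F V // Module.finrank F s = 1} → E)
    (hspan : Submodule.span ℝ (Set.range shat) = ⊤)
    (hnorm : ∀ s, ‖shat s‖ ^ 2 = gaussR q n - 1)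
    (hinner : ∀ s t, s ≠ t → (inner ℝ (shat s) (shat t) : ℝ) = -1)
    (hsum : ∑ᶠ s, shat s = 0)
    (x : Submodule F V) (hx : Module.finrank F x = k) :
    (∑ᶠ (z : Submodule F V) (_ : Module.finrank F z = k ∧
        Module.finrank F (x ⊓ z : Submodule F V) = k - 1), uhat shat z)
      = ((q : ℝ) ^ 2 * gaussR q (k - 1) * gaussR q (n - k - 1) - 1) • uhat shat x := by
  classical
  haveI : Finite V := Module.finite_of_finite F
  haveI : Finite (Submodule F V) := aux19_finite_submodule
  haveI : Fintype (Submodule F V) := Fintype.ofFinite _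
  haveI : Fintype {s : Submodule F V // Module.finrank F s = 1} := Fintype.ofFinite _
  have hq2 : 2 ≤ q := hq ▸ Fintype.one_lt_card
  have hk3 : 3 ≤ k := by omega
  -- `uhat` as a finset sum
  have huhat : ∀ u : Submodule F V,
      uhat shat u = ∑ t ∈ univ.filter
        (fun t : {s : Submodule F V // Module.finrank F s = 1} => t.1 ≤ u), shat t := by
    intro u
    have hset : {t : {s : Submodule F V // Module.finrank F s = 1} | t.1 ≤ u}
        = ↑(univ.filter
            (fun t : {s : Submodule F V // Module.finrank F s = 1} => t.1 ≤ u)) := by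
      ext t; simp
    calc uhat shat u
        = ∑ᶠ t ∈ {t : {s : Submodule F V // Module.finrank F s = 1} | t.1 ≤ u}, shat t := rfl
      _ = _ := by rw [hset, finsum_mem_coe_finset]
  set P : Submodule F V → Prop := fun z => Module.finrank F z = k ∧
      Module.finrank F (x ⊓ z : Submodule F V) = k - 1 with hP
  have hmain : (∑ᶠ (z : Submodule F V) (_ : Module.finrank F z = k ∧
        Module.finrank F (x ⊓ z : Submodule F V) = k - 1), uhat shat z)
      = ∑ z ∈ univ.filter P, uhat shat z := by
    have hset : {z : Submodule F V | P z} = ↑(univ.filter P) := by ext z; simp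
    calc (∑ᶠ (z : Submodule F V) (_ : Module.finrank F z = k ∧
          Module.finrank F (x ⊓ z : Submodule F V) = k - 1), uhat shat z)
        = ∑ᶠ z ∈ {z : Submodule F V | P z}, uhat shat z := rfl
      _ = _ := by rw [hset, finsum_mem_coe_finset]
  rw [hmain]
  set A : ℕ := gaussN q (k - 1) * (gaussN q (n - k + 1) - 1) with hA
  set B : ℕ := gaussN q k with hB
  have hswap : ∑ z ∈ univ.filter P, uhat shat z
      = ∑ t : {s : Submodule F V // Module.finrank F s = 1},
          ((univ.filter P).filter (fun z => t.1 ≤ z)).card • shat t := by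
    rw [Finset.sum_congr rfl (fun z _ => huhat z)]
    calc ∑ z ∈ univ.filter P, ∑ t ∈ univ.filter
            (fun t : {s : Submodule F V // Module.finrank F s = 1} => t.1 ≤ z), shat t
        = ∑ z ∈ univ.filter P, ∑ t : {s : Submodule F V // Module.finrank F s = 1},
            if t.1 ≤ z then shat t else 0 :=
          Finset.sum_congr rfl fun z _ => Finset.sum_filter _ _
      _ = ∑ t : {s : Submodule F V // Module.finrank F s = 1}, ∑ z ∈ univ.filter P,
            if t.1 ≤ z then shat t else 0 := Finset.sum_comm
      _ = _ := by
          refine Finset.sum_congr rfl fun t _ => ?_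
          rw [← Finset.sum_filter, Finset.sum_const]
  have hcards : ∀ t : {s : Submodule F V // Module.finrank F s = 1},
      ((univ.filter P).filter (fun z => t.1 ≤ z)).card = if t.1 ≤ x then A else B := by
    intro t
    rw [Finset.filter_filter]
    have hcc : (univ.filter (fun z : Submodule F V => P z ∧ t.1 ≤ z)).card
        = Nat.card {z : Submodule F V // (Module.finrank F z = k ∧
            Module.finrank F (x ⊓ z : Submodule F V) = k - 1) ∧ t.1 ≤ z} := by
      rw [Nat.card_eq_fintype_card, Fintype.card_subtype]
    rw [hcc]
    by_cases h : t.1 ≤ x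
    · rw [if_pos h]
      have hcA := aux19_countA x t.1 t.2 h hx hn hk3 hnk
      rw [hq] at hcA
      exact hcA
    · rw [if_neg h]
      have hcB := aux19_countB x t.1 t.2 h hx (by omega)
      rw [hq] at hcB
      exact hcB
  rw [hswap, Finset.sum_congr rfl (fun t _ => by rw [hcards t])]
  have hconv : ∀ t : {s : Submodule F V // Module.finrank F s = 1},
      (if t.1 ≤ x then A else B) • shat t
      = (B : ℝ) • shat t + (if t.1 ≤ x then ((A : ℝ) - (B : ℝ)) • shat t else 0) := by
    intro t
    by_cases h : t.1 ≤ x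
    · rw [if_pos h, if_pos h, ← Nat.cast_smul_eq_nsmul ℝ, ← add_smul]
      congr 1; ring
    · rw [if_neg h, if_neg h, ← Nat.cast_smul_eq_nsmul ℝ, add_zero]
  rw [Finset.sum_congr rfl (fun t _ => hconv t), Finset.sum_add_distrib, ← Finset.smul_sum]
  have hsum0 : ∑ t : {s : Submodule F V // Module.finrank F s = 1}, shat t = 0 := by
    rw [← finsum_eq_sum_of_fintype]; exact hsum
  rw [hsum0, smul_zero, zero_add, ← Finset.sum_filter, ← Finset.smul_sum, ← huhat x]
  -- now identify the scalars
  have hq1R : ((q : ℝ) - 1) ≠ 0 := by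
    have : (2 : ℝ) ≤ (q : ℝ) := by exact_mod_cast hq2
    linarith
  have hGR : ∀ m : ℕ, ((q : ℝ) - 1) * (gaussN q m : ℝ) = (q : ℝ) ^ m - 1 := by
    intro m
    have h := aux19_geom q (by omega) m
    have h2 := congrArg (Nat.cast (R := ℝ)) h
    push_cast [Nat.cast_sub (show 1 ≤ q by omega)] at h2
    linarith
  have hgr : ∀ m : ℕ, gaussR q m = (gaussN q m : ℝ) := by
    intro m
    rw [gaussR, div_eq_iff hq1R]
    linarith [hGR m]
  have hscalar : (A : ℝ) - (B : ℝ)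
      = (q : ℝ) ^ 2 * gaussR q (k - 1) * gaussR q (n - k - 1) - 1 := by
    rw [hgr (k - 1), hgr (n - k - 1), hA, hB]
    have h1le : 1 ≤ gaussN q (n - k + 1) := aux19_gauss_pos q _ (by omega)
    push_cast [Nat.cast_sub h1le]
    have ha := hGR (k - 1)
    have hb := hGR (n - k - 1)
    have hc := hGR (n - k + 1)
    have hd := hGR k
    have e1 : (q : ℝ) ^ (n - k + 1) = (q : ℝ) ^ (n - k - 1) * (q : ℝ) ^ 2 := by
      rw [← pow_add]; congr 1; omega
    have e2 : (q : ℝ) ^ k = (q : ℝ) ^ (k - 1) * (q : ℝ) := by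
      rw [← pow_succ]; congr 1; omega
    rw [e1] at hc
    rw [e2] at hd
    have hc2 : ((q : ℝ) - 1) * (gaussN q (n - k + 1) : ℝ)
        = (((q : ℝ) - 1) * (gaussN q (n - k - 1) : ℝ) + 1) * (q : ℝ) ^ 2 - 1 := by
      linear_combination hc - (q : ℝ) ^ 2 * hb
    have hd2 : ((q : ℝ) - 1) * (gaussN q k : ℝ)
        = (((q : ℝ) - 1) * (gaussN q (k - 1) : ℝ) + 1) * (q : ℝ) - 1 := by
      linear_combination hd - (q : ℝ) * ha
    apply mul_left_cancel₀ hq1R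
    linear_combination (gaussN q (k - 1) : ℝ) * hc2 - hd2
  rw [hscalar]
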